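/- If all zeros z_1,...,z_n of a monic polynomial F of degree n lie in the closed unit disk, then the critical points w_1,...,w_{n−1} of F satisfy ∏_{j=1}^{n−1} |F(w_j)| ≤ 1. In particular, there exists a zero z_k of F with ∏_{j=1}^{n−1}|z_k − w_j| ≤ 1. -/

import Mathlib

open Finset

open Matrix
open scoped ComplexOrder

lemma trace_eq_sum_eig {m : ℕ} {A : Matrix (Fin m) (Fin m) ℂ} (hA : A.IsHermitian) :
    A.trace = ∑ i, (hA.eigenvalues i : ℂ) := by
  conv_lhs => rw [hA.spectral_theorem]
  rw [Unitary.conjStarAlgAut_apply, Matrix.trace_mul_cycle]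
  rw [(Matrix.mem_unitaryGroup_iff').mp (Matrix.IsHermitian.eigenvectorUnitary hA).2, one_mul,
    Matrix.trace_diagonal]
  rfl

lemma psd_det_le {m : ℕ} (hm : 0 < m) {A : Matrix (Fin m) (Fin m) ℂ} (hA : A.PosSemidef)
    {c : ℝ} (hc : 0 ≤ c) (htr : A.trace.re ≤ m * c) : A.det.re ≤ c ^ m := by
  have hherm := hA.1
  have hev : ∀ i, 0 ≤ hherm.eigenvalues i := hA.eigenvalues_nonneg
  have hdet : A.det.re = ∏ i, hherm.eigenvalues i := by
    rw [hherm.det_eq_prod_eigenvalues]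
    norm_cast
  have htr2 : (∑ i, hherm.eigenvalues i) ≤ m * c := by
    have := trace_eq_sum_eig hherm
    rw [this] at htr
    simpa using htr
  rw [hdet]
  -- AM-GM
  have hw : ∀ i ∈ (univ : Finset (Fin m)), (0:ℝ) ≤ (m:ℝ)⁻¹ := by
    intro i _; positivity
  have hw' : ∑ _i ∈ (univ : Finset (Fin m)), ((m:ℝ)⁻¹) = 1 := by
    simp [Finset.card_univ]
    field_simp
  have hgm := Real.geom_mean_le_arith_mean_weighted univ (fun _ => (m:ℝ)⁻¹)
    hherm.eigenvalues hw hw' (fun i _ => hev i)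
  have hsum : ∑ i, (m:ℝ)⁻¹ * hherm.eigenvalues i ≤ c := by
    rw [← Finset.mul_sum]
    rw [inv_mul_le_iff₀ (by positivity)]
    linarith [htr2]
  have hle : (∏ i, hherm.eigenvalues i ^ ((m:ℝ)⁻¹)) ≤ c := le_trans hgm hsum
  have hnn : 0 ≤ ∏ i, hherm.eigenvalues i ^ ((m:ℝ)⁻¹) :=
    Finset.prod_nonneg fun i _ => Real.rpow_nonneg (hev i) _
  calc ∏ i, hherm.eigenvalues i
      = (∏ i, hherm.eigenvalues i ^ ((m:ℝ)⁻¹)) ^ m := by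
        rw [← Finset.prod_pow]
        refine Finset.prod_congr rfl fun i _ => ?_
        rw [← Real.rpow_natCast (hherm.eigenvalues i ^ ((m:ℝ)⁻¹)) m,
          ← Real.rpow_mul (hev i), inv_mul_cancel₀ (by positivity : (m:ℝ) ≠ 0),
          Real.rpow_one]
    _ ≤ c ^ m := pow_le_pow_left₀ hnn hle m

lemma vand_bound {n : ℕ} (hn : 0 < n) (z : Fin n → ℂ) (hz : ∀ k, ‖z k‖ ≤ 1) :
    ‖(Matrix.vandermonde z).det‖ ^ 2 ≤ (n:ℝ) ^ n := by
  set V := Matrix.vandermonde z with hV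
  have hpsd : (V * Vᴴ).PosSemidef := Matrix.posSemidef_self_mul_conjTranspose V
  have hdet : (V * Vᴴ).det.re = ‖V.det‖ ^ 2 := by
    rw [Matrix.det_mul, Matrix.det_conjTranspose, Complex.star_def, Complex.mul_conj]
    simp [Complex.normSq_eq_norm_sq]
    norm_cast
  have htr : (V * Vᴴ).trace.re ≤ (n:ℝ) * n := by
    rw [Matrix.trace]
    have : ∀ k, ((V * Vᴴ) k k).re ≤ (n:ℝ) := by
      intro k
      rw [Matrix.mul_apply]
      have : ∀ m : Fin n, (V k m * (Vᴴ) m k).re ≤ 1 := by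
        intro m
        rw [Matrix.conjTranspose_apply, Complex.star_def, Complex.mul_conj]
        have : Complex.normSq (V k m) = ‖V k m‖ ^ 2 := by
          simp [Complex.normSq_eq_norm_sq]
        rw [Complex.ofReal_re, this, hV, Matrix.vandermonde_apply, norm_pow]
        have h1 : ‖z k‖ ^ (m:ℕ) ≤ 1 := by
          calc ‖z k‖ ^ (m:ℕ) ≤ 1 ^ (m:ℕ) := pow_le_pow_left₀ (norm_nonneg _) (hz k) _
            _ = 1 := one_pow _
        nlinarith [pow_nonneg (norm_nonneg (z k)) (m:ℕ)]
        
      calc (∑ m, V k m * Vᴴ m k).re = ∑ m, (V k m * Vᴴ m k).re := by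
            rw [Complex.re_sum]
        _ ≤ ∑ _m : Fin n, (1:ℝ) := Finset.sum_le_sum fun m _ => this m
        _ = n := by simp
    calc (∑ k, (V * Vᴴ) k k).re = ∑ k, ((V * Vᴴ) k k).re := by rw [Complex.re_sum]
      _ ≤ ∑ _k : Fin n, (n:ℝ) := Finset.sum_le_sum fun k _ => this k
      _ = n * n := by simp [mul_comm]
  have := psd_det_le hn hpsd (by positivity : (0:ℝ) ≤ (n:ℝ)) htr
  rw [hdet] at this
  exact this

/-- If all zeros of a monic polynomial `F` of degree `n` lie in the closed
unit disk, then its critical points `w j` satisfy `∏ j, |F(w j)| ≤ 1`; in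
particular some zero `z k` satisfies `∏ j, |z k - w j| ≤ 1`. -/
theorem stmt_7 (n : ℕ) (hn : 2 ≤ n) (z : Fin n → ℂ) (hz : ∀ k, ‖z k‖ ≤ 1)
    (w : Fin (n - 1) → ℂ)
    (f : ℂ → ℂ) (hf : ∀ x, f x = ∏ k, (x - z k))
    (hf' : ∀ x, deriv f x = (n : ℂ) * ∏ j, (x - w j)) :
    (∏ j, ‖f (w j)‖) ≤ 1 ∧ ∃ k, (∏ j, ‖z k - w j‖) ≤ 1 := by
  have hn0 : 0 < n := by omega
  have hfeq : f = fun x => ∏ k, (x - z k) := funext hf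
  -- derivative at z k
  have hder : ∀ k, deriv f (z k) = ∏ m ∈ univ.erase k, (z k - z m) := by
    intro k
    have hD : HasDerivAt f (∑ i, (∏ j ∈ univ.erase i, (z k - z j)) • (1:ℂ)) (z k) := by
      rw [hfeq]
      exact HasDerivAt.fun_finsetProd (fun i _ => (hasDerivAt_id (z k)).sub_const (z i))
    rw [hD.deriv]
    rw [Finset.sum_eq_single k]
    · simp
    · intro l _ hl
      rw [Finset.prod_eq_zero (Finset.mem_erase.mpr ⟨Ne.symm hl, Finset.mem_univ k⟩)]
      · simp
      · simp
    · simp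
  have key : ∀ k, (n:ℝ) * ∏ j, ‖z k - w j‖ = ∏ m ∈ univ.erase k, ‖z k - z m‖ := by
    intro k
    have h := (hf' (z k)).symm
    rw [hder k] at h
    have hnorm := congrArg (fun c : ℂ => ‖c‖) h
    simpa [norm_prod, Complex.norm_natCast] using hnorm
  -- bound on discriminant product
  have Pbound : (∏ k, ∏ m ∈ univ.erase k, ‖z k - z m‖) ≤ (n:ℝ) ^ n := by
    have h1 : (∏ k, ∏ m ∈ univ.erase k, ‖z k - z m‖)
        = ∏ i, ∏ j ∈ Finset.Ioi i, (‖z i - z j‖ * ‖z j - z i‖) := by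
      have h := Finset.prod_prod_Ioi_mul_eq_prod_prod_off_diag (fun a b : Fin n => ‖z b - z a‖)
      simp only [Finset.compl_singleton] at h
      refine Eq.trans ?_ h.symm
      refine Finset.prod_congr rfl fun k _ => Finset.prod_congr ?_ fun m _ => rfl
      ext m; simp
    have h2 : (∏ i, ∏ j ∈ Finset.Ioi i, (‖z i - z j‖ * ‖z j - z i‖))
        = (∏ i, ∏ j ∈ Finset.Ioi i, ‖z j - z i‖) ^ 2 := by
      rw [← Finset.prod_pow]
      refine Finset.prod_congr rfl fun i _ => ?_
      rw [← Finset.prod_pow]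
      refine Finset.prod_congr rfl fun j _ => ?_
      rw [norm_sub_rev, sq]
    have h3 : (∏ i, ∏ j ∈ Finset.Ioi i, ‖z j - z i‖) = ‖(Matrix.vandermonde z).det‖ := by
      rw [Matrix.det_vandermonde]
      simp [norm_prod]
    rw [h1, h2, h3]
    exact vand_bound hn0 z hz
  -- the double product over zeros
  have prodnn : ∀ k, (0:ℝ) ≤ ∏ j, ‖z k - w j‖ :=
    fun k => Finset.prod_nonneg fun j _ => norm_nonneg _
  have main : (∏ k, ∏ j, ‖z k - w j‖) ≤ 1 := by
    have hpow : (0:ℝ) < (n:ℝ) ^ n := by positivity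
    rw [← mul_le_mul_iff_right₀ hpow, mul_one]
    calc (n:ℝ) ^ n * ∏ k, ∏ j, ‖z k - w j‖
        = ∏ k : Fin n, ((n:ℝ) * ∏ j, ‖z k - w j‖) := by
          rw [Finset.prod_mul_distrib, Finset.prod_const, Finset.card_univ, Fintype.card_fin]
      _ = ∏ k, ∏ m ∈ univ.erase k, ‖z k - z m‖ := Finset.prod_congr rfl fun k _ => key k
      _ ≤ (n:ℝ) ^ n := Pbound
  constructor
  · calc (∏ j, ‖f (w j)‖) = ∏ j, ∏ k, ‖w j - z k‖ := by
          refine Finset.prod_congr rfl fun j _ => ?_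
          rw [hf (w j), norm_prod]
      _ = ∏ k, ∏ j, ‖z k - w j‖ := by
          rw [Finset.prod_comm]
          exact Finset.prod_congr rfl fun k _ => Finset.prod_congr rfl fun j _ => norm_sub_rev _ _
      _ ≤ 1 := main
  · by_contra hcon
    push_neg at hcon
    have : (1:ℝ) < ∏ k, ∏ j, ‖z k - w j‖ := by
      calc (1:ℝ) = ∏ _k : Fin n, (1:ℝ) := by simp
        _ < ∏ k, ∏ j, ‖z k - w j‖ :=
          Finset.prod_lt_prod_of_nonempty (by simp) (fun k _ => hcon k)
            (Finset.univ_nonempty_iff.mpr ⟨⟨0, hn0⟩⟩)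
    linarith
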